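/- arXiv:1102.5714 — 2 statements merged into one kernel-verified Lean document; each statement's English description precedes it below -/
import Mathlib

section
/- Let μ be a finite Borel measure on a compact interval [a,b] ⊂ (0,∞) with the band property: there is C₀ ≥ 0 such that μ({y : |√y − s| ≤ η}) ≤ C₀ η for all s ≥ 0 and η > 0. Then for every ψ ∈ L²(μ), every T > 0 and every ε ∈ (0,1], ∫₀^T |∫_{[a,b]} exp(i √λ t / ε) ψ(λ) dμ(λ)|² dt ≤ C ε ‖ψ‖²_{L²(μ)}, where C depends only on C₀ and T. -/
open MeasureTheory Complex Real Set Filter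

noncomputable section

namespace Stmt11Aux

/-- The series constant appearing in the band decomposition. -/
def Sc (T : ℝ) : ℝ := ∑' k : ℕ, ((k : ℝ) + 1) * Real.exp (-(k : ℝ) ^ 2 * T ^ 2 / 4)

lemma summable_aux {T : ℝ} (hT : 0 < T) :
    Summable (fun k : ℕ => ((k : ℝ) + 1) * Real.exp (-(k : ℝ) ^ 2 * T ^ 2 / 4)) := by
  set r : ℝ := Real.exp (-(T ^ 2 / 4)) with hr
  have hr0 : 0 < r := Real.exp_pos _
  have hr1 : r < 1 := by
    rw [hr, Real.exp_lt_one_iff]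
    nlinarith
  have hmaj : Summable (fun k : ℕ => ((k : ℝ) + 1) * r ^ k) := by
    have h1 : Summable (fun k : ℕ => (k : ℝ) ^ 1 * r ^ k) :=
      summable_pow_mul_geometric_of_norm_lt_one 1 (by rwa [Real.norm_eq_abs, abs_of_pos hr0])
    have h2 : Summable (fun k : ℕ => r ^ k) := summable_geometric_of_lt_one hr0.le hr1
    have := h1.add h2
    refine this.congr fun k => by ring
  refine Summable.of_nonneg_of_le (fun k => by positivity) (fun k => ?_) hmaj
  have h1 : Real.exp (-(k : ℝ) ^ 2 * T ^ 2 / 4) = r ^ (k ^ 2) := by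
    rw [hr, ← Real.exp_nat_mul]
    congr 1
    push_cast
    ring
  have h2 : r ^ (k ^ 2) ≤ r ^ k :=
    pow_le_pow_of_le_one hr0.le hr1.le (Nat.le_self_pow two_ne_zero k)
  rw [h1]
  have : (0:ℝ) ≤ (k : ℝ) + 1 := by positivity
  nlinarith

lemma Sc_nonneg (T : ℝ) : 0 ≤ Sc T := tsum_nonneg fun k => by positivity

lemma kernel_integral_bound (C₀ T ε : ℝ) (hC₀ : 0 ≤ C₀) (hT : 0 < T) (hε : 0 < ε)
    (μ : Measure ℝ) [IsFiniteMeasure μ] (a b : ℝ)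
    (hsupp : μ (Set.Icc a b)ᶜ = 0)
    (hband : ∀ s ≥ (0:ℝ), ∀ η > (0:ℝ),
      μ {y | |Real.sqrt y - s| ≤ η} ≤ ENNReal.ofReal (C₀ * η))
    (s : ℝ) (hs : 0 ≤ s) (hsb : s ≤ Real.sqrt b) :
    (∫ l, Real.exp (-((Real.sqrt l - s) / ε) ^ 2 * T ^ 2 / 4) ∂μ) ≤ C₀ * ε * Sc T := by
  obtain ⟨N, hN⟩ := exists_nat_gt ((2 * Real.sqrt b) / ε)
  have hm : Measurable fun l => |Real.sqrt l - s| :=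
    (Real.continuous_sqrt.measurable.sub measurable_const).abs
  set B : ℕ → Set ℝ := fun k =>
    {l | (k : ℝ) * ε ≤ |Real.sqrt l - s| ∧ |Real.sqrt l - s| < ((k : ℝ) + 1) * ε} with hB
  have hBmeas : ∀ k, MeasurableSet (B k) := fun k =>
    (measurableSet_le measurable_const hm).inter (measurableSet_lt hm measurable_const)
  have hμB : ∀ k : ℕ, (μ (B k)).toReal ≤ C₀ * (((k : ℝ) + 1) * ε) := by
    intro k
    have hsub : B k ⊆ {y | |Real.sqrt y - s| ≤ ((k : ℝ) + 1) * ε} := fun l hl => le_of_lt hl.2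
    have h := (measure_mono hsub).trans (hband s hs (((k : ℝ) + 1) * ε) (by positivity))
    exact ENNReal.toReal_le_of_le_ofReal (by positivity) h
  set F : ℝ → ℝ := fun l => ∑ k ∈ Finset.range N,
    (B k).indicator (fun _ => Real.exp (-(k : ℝ) ^ 2 * T ^ 2 / 4)) l with hF
  have hFint : Integrable F μ :=
    integrable_finset_sum _ fun k _ => (integrable_const _).indicator (hBmeas k)
  have haemem : ∀ᵐ l ∂μ, l ∈ Set.Icc a b := by
    rw [ae_iff]
    exact hsupp
  have hle : ∀ᵐ l ∂μ, Real.exp (-((Real.sqrt l - s) / ε) ^ 2 * T ^ 2 / 4) ≤ F l := by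
    filter_upwards [haemem] with l hl
    have hu0 : (0:ℝ) ≤ |Real.sqrt l - s| := abs_nonneg _
    have hub : |Real.sqrt l - s| < N * ε := by
      have h1 : Real.sqrt l ≤ Real.sqrt b := Real.sqrt_le_sqrt hl.2
      have h2 : 0 ≤ Real.sqrt l := Real.sqrt_nonneg l
      have h3 : |Real.sqrt l - s| ≤ 2 * Real.sqrt b := by
        rw [abs_sub_le_iff]; constructor <;> nlinarith
      rw [div_lt_iff₀ hε] at hN
      linarith
    set k : ℕ := ⌊|Real.sqrt l - s| / ε⌋₊ with hk
    have hk1 : (k : ℝ) * ε ≤ |Real.sqrt l - s| := by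
      have h := Nat.floor_le (by positivity : (0:ℝ) ≤ |Real.sqrt l - s| / ε)
      calc (k : ℝ) * ε ≤ (|Real.sqrt l - s| / ε) * ε := by nlinarith
        _ = |Real.sqrt l - s| := div_mul_cancel₀ _ hε.ne'
    have hk2 : |Real.sqrt l - s| < ((k : ℝ) + 1) * ε := by
      have h := Nat.lt_floor_add_one (|Real.sqrt l - s| / ε)
      calc |Real.sqrt l - s| = (|Real.sqrt l - s| / ε) * ε := (div_mul_cancel₀ _ hε.ne').symm
        _ < ((k : ℝ) + 1) * ε := by nlinarith
    have hkN : k < N := by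
      by_contra h
      push_neg at h
      have : (N : ℝ) ≤ (k : ℝ) := Nat.cast_le.2 h
      nlinarith
    have hmem : l ∈ B k := ⟨hk1, hk2⟩
    have hexp : Real.exp (-((Real.sqrt l - s) / ε) ^ 2 * T ^ 2 / 4)
        ≤ Real.exp (-(k : ℝ) ^ 2 * T ^ 2 / 4) := by
      apply Real.exp_le_exp.2
      have h1 : (k : ℝ) ≤ |Real.sqrt l - s| / ε := by
        rw [le_div_iff₀ hε]; exact hk1
      have h2 : ((k : ℝ)) ^ 2 ≤ (|Real.sqrt l - s| / ε) ^ 2 := by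
        have hk0 : (0:ℝ) ≤ (k : ℝ) := Nat.cast_nonneg k
        nlinarith
      have h3 : (|Real.sqrt l - s| / ε) ^ 2 = ((Real.sqrt l - s) / ε) ^ 2 := by
        rw [div_pow, div_pow, _root_.sq_abs]
      rw [h3] at h2
      nlinarith [sq_nonneg T]
    refine hexp.trans ?_
    have h := Finset.single_le_sum
      (f := fun j => (B j).indicator (fun _ => Real.exp (-(j : ℝ) ^ 2 * T ^ 2 / 4)) l)
      (fun j _ => Set.indicator_nonneg (fun _ _ => (Real.exp_pos _).le) l)
      (Finset.mem_range.2 hkN)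
    simp only [Set.indicator_of_mem hmem] at h
    exact h.trans_eq (by rw [hF])
  have h1 : ∫ l, Real.exp (-((Real.sqrt l - s) / ε) ^ 2 * T ^ 2 / 4) ∂μ ≤ ∫ l, F l ∂μ :=
    integral_mono_of_nonneg (Eventually.of_forall fun l => (Real.exp_pos _).le) hFint hle
  have h2 : ∫ l, F l ∂μ
      = ∑ k ∈ Finset.range N, (μ (B k)).toReal * Real.exp (-(k : ℝ) ^ 2 * T ^ 2 / 4) := by
    rw [hF, integral_finset_sum _ fun k _ => (integrable_const _).indicator (hBmeas k)]
    refine Finset.sum_congr rfl fun k _ => ?_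
    rw [integral_indicator_const _ (hBmeas k), smul_eq_mul, measureReal_def]
  have h3 : ∑ k ∈ Finset.range N, (μ (B k)).toReal * Real.exp (-(k : ℝ) ^ 2 * T ^ 2 / 4)
      ≤ ∑ k ∈ Finset.range N, (C₀ * ε) * (((k : ℝ) + 1) * Real.exp (-(k : ℝ) ^ 2 * T ^ 2 / 4)) := by
    refine Finset.sum_le_sum fun k _ => ?_
    have hk := hμB k
    have hek := (Real.exp_pos (-(k : ℝ) ^ 2 * T ^ 2 / 4)).le
    have hμ0 := ENNReal.toReal_nonneg (a := μ (B k))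
    nlinarith
  have h4 : ∑ k ∈ Finset.range N, (C₀ * ε) * (((k : ℝ) + 1) * Real.exp (-(k : ℝ) ^ 2 * T ^ 2 / 4))
      ≤ (C₀ * ε) * Sc T := by
    rw [← Finset.mul_sum]
    refine mul_le_mul_of_nonneg_left ?_ (by positivity)
    exact Summable.sum_le_tsum _ (fun k _ => by positivity) (summable_aux hT)
  calc ∫ l, Real.exp (-((Real.sqrt l - s) / ε) ^ 2 * T ^ 2 / 4) ∂μ ≤ ∫ l, F l ∂μ := h1
    _ = _ := h2
    _ ≤ _ := h3
    _ ≤ (C₀ * ε) * Sc T := h4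
    _ = C₀ * ε * Sc T := by ring


lemma gauss_comp (T ε : ℝ) (hT : 0 < T) (hε : 0 < ε) (ω : ℝ) :
    (∫ t : ℝ, ((Real.exp (-(T ^ 2)⁻¹ * t ^ 2) : ℝ) : ℂ)
        * Complex.exp (Complex.I * ((ω * t : ℝ) : ℂ)))
      = ((Real.sqrt π * T : ℝ) : ℂ) * ((Real.exp (-ω ^ 2 * T ^ 2 / 4) : ℝ) : ℂ) := by
  have hb : (0:ℝ) < (T ^ 2)⁻¹ := by positivity
  have key := fourierIntegral_gaussian (b := (((T ^ 2)⁻¹ : ℝ) : ℂ))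
    (by rw [Complex.ofReal_re]; exact hb) ((ω : ℂ))
  have heq : ∀ t : ℝ, ((Real.exp (-(T ^ 2)⁻¹ * t ^ 2) : ℝ) : ℂ)
      * Complex.exp (Complex.I * ((ω * t : ℝ) : ℂ))
      = Complex.exp (Complex.I * (ω : ℂ) * (t : ℂ))
        * Complex.exp (-(((T ^ 2)⁻¹ : ℝ) : ℂ) * (t : ℂ) ^ 2) := by
    intro t
    rw [Complex.ofReal_exp, mul_comm]
    congr 2 <;> push_cast <;> ring
  simp_rw [heq]
  rw [key]
  have h1 : ((π : ℂ) / (((T ^ 2)⁻¹ : ℝ) : ℂ)) ^ (1/2 : ℂ) = ((Real.sqrt π * T : ℝ) : ℂ) := by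
    have h2 : ((π : ℂ) / (((T ^ 2)⁻¹ : ℝ) : ℂ)) = (((π * T ^ 2 : ℝ)) : ℂ) := by
      push_cast
      field_simp
    rw [h2, show (1/2 : ℂ) = ((1/2 : ℝ) : ℂ) by norm_num,
      ← Complex.ofReal_cpow (by positivity)]
    congr 1
    rw [← Real.sqrt_eq_rpow, Real.sqrt_mul Real.pi_nonneg, Real.sqrt_sq hT.le]
  have h3 : Complex.exp (-(ω : ℂ) ^ 2 / (4 * (((T ^ 2)⁻¹ : ℝ) : ℂ)))
      = ((Real.exp (-ω ^ 2 * T ^ 2 / 4) : ℝ) : ℂ) := by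
    rw [Complex.ofReal_exp]
    congr 1
    push_cast
    field_simp
  rw [h1, h3]


end Stmt11Aux

open Stmt11Aux

set_option maxHeartbeats 1000000 in
/-- Abstract dispersive estimate (Lemma 5.2): for a finite measure on `[a,b] ⊂ (0,∞)`
whose mass in `√`-scale bands of width `η` is `≤ C₀ η`, oscillatory integrals
`∫ exp(i√λ t/ε) ψ dμ` decay in `L²(0,T)` at rate `√ε`, with a constant depending
only on `C₀` and `T`. -/
theorem stmt11 (C₀ T : ℝ) (hC₀ : 0 ≤ C₀) (hT : 0 < T) :
    ∃ C > (0 : ℝ), ∀ (μ : Measure ℝ), IsFiniteMeasure μ →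
      ∀ a b : ℝ, 0 < a → a ≤ b → μ (Set.Icc a b)ᶜ = 0 →
      (∀ s ≥ (0 : ℝ), ∀ η > (0 : ℝ),
        μ {y | |Real.sqrt y - s| ≤ η} ≤ ENNReal.ofReal (C₀ * η)) →
      ∀ ψ : ℝ → ℂ, MemLp ψ 2 μ → ∀ ε : ℝ, 0 < ε → ε ≤ 1 →
        (∫ t in Set.Ioc (0 : ℝ) T,
            ‖∫ lam in Set.Icc a b,
                Complex.exp (Complex.I * ((Real.sqrt lam * t / ε : ℝ) : ℂ)) * ψ lam ∂μ‖ ^ 2)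
          ≤ C * ε * ∫ lam, ‖ψ lam‖ ^ 2 ∂μ := by
  have hSc : 0 ≤ Sc T := Sc_nonneg T
  have hcpos : (0:ℝ) < Real.exp 1 * (Real.sqrt π * T) * (C₀ * Sc T) + 1 := by
    have h1 : (0:ℝ) ≤ Real.exp 1 * (Real.sqrt π * T) * (C₀ * Sc T) := by
      have h2 := Real.sqrt_nonneg π
      have h3 := (Real.exp_pos (1:ℝ)).le
      have := hT.le
      positivity
    linarith
  refine ⟨Real.exp 1 * (Real.sqrt π * T) * (C₀ * Sc T) + 1, hcpos, ?_⟩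
  intro μ hfin a b ha hab hsupp hband ψ hψ ε hε hε1
  haveI := hfin
  have haemem : ∀ᵐ l ∂μ, l ∈ Set.Icc a b := by
    rw [ae_iff]
    exact hsupp
  have hrestr : μ.restrict (Set.Icc a b) = μ := Measure.restrict_eq_self_of_ae_mem haemem
  obtain ⟨ψ₀, hψ₀m, hψae⟩ : ∃ ψ₀ : ℝ → ℂ, StronglyMeasurable ψ₀ ∧ ψ =ᵐ[μ] ψ₀ :=
    ⟨hψ.1.mk ψ, hψ.1.stronglyMeasurable_mk, hψ.1.ae_eq_mk⟩
  have hψ₀ : MemLp ψ₀ 2 μ := hψ.ae_eq hψae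
  have hgoalL : ∀ t : ℝ,
      (∫ lam in Set.Icc a b,
          Complex.exp (Complex.I * ((Real.sqrt lam * t / ε : ℝ) : ℂ)) * ψ lam ∂μ)
      = ∫ lam, Complex.exp (Complex.I * ((Real.sqrt lam * t / ε : ℝ) : ℂ)) * ψ₀ lam ∂μ := by
    intro t
    rw [show (∫ lam in Set.Icc a b,
          Complex.exp (Complex.I * ((Real.sqrt lam * t / ε : ℝ) : ℂ)) * ψ lam ∂μ)
        = ∫ lam, Complex.exp (Complex.I * ((Real.sqrt lam * t / ε : ℝ) : ℂ)) * ψ lam ∂μ from by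
      rw [hrestr]]
    exact integral_congr_ae (hψae.mono fun l hl => by simp only [hl])
  simp_rw [hgoalL]
  rw [show (∫ lam, ‖ψ lam‖ ^ 2 ∂μ) = ∫ lam, ‖ψ₀ lam‖ ^ 2 ∂μ from
    integral_congr_ae (hψae.mono fun l hl => by simp only [hl])]
  -- integrability of ψ₀
  have hψmeas : Measurable ψ₀ := hψ₀m.measurable
  have hψ₀2 : Integrable (fun l => ‖ψ₀ l‖ ^ 2) μ := hψ₀.norm.integrable_sq
  have hψ₀1 : Integrable ψ₀ μ :=
    memLp_one_iff_integrable.1 (hψ₀.mono_exponent (by norm_num))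
  -- oscillatory factor
  set E : ℝ → ℝ → ℂ :=
    fun lam t => Complex.exp (Complex.I * ((Real.sqrt lam * t / ε : ℝ) : ℂ)) with hE
  have hE1 : ∀ lam t : ℝ, ‖E lam t‖ = 1 := by
    intro lam t
    simp only [hE]
    simp [Complex.norm_exp]
  set g : ℝ → ℂ := fun t => ∫ lam, E lam t * ψ₀ lam ∂μ with hg
  have hEct : ∀ lam : ℝ, Continuous fun t => E lam t := by
    intro lam
    simp only [hE]
    exact Complex.continuous_exp.comp (continuous_const.mul
      (Complex.continuous_ofReal.comp ((continuous_const.mul continuous_id).div_const ε)))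
  have hEcl : ∀ t : ℝ, Continuous fun lam => E lam t := by
    intro t
    simp only [hE]
    exact Complex.continuous_exp.comp (continuous_const.mul
      (Complex.continuous_ofReal.comp ((Real.continuous_sqrt.mul continuous_const).div_const ε)))
  have hEmeas : ∀ t, AEStronglyMeasurable (fun lam => E lam t * ψ₀ lam) μ := fun t =>
    ((hEcl t).aestronglyMeasurable).mul hψ₀m.aestronglyMeasurable
  set M : ℝ := ∫ lam, ‖ψ₀ lam‖ ∂μ with hM
  have hM0 : 0 ≤ M := integral_nonneg fun l => norm_nonneg _
  have hgb : ∀ t, ‖g t‖ ≤ M := by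
    intro t
    calc ‖g t‖ ≤ ∫ lam, ‖E lam t * ψ₀ lam‖ ∂μ := norm_integral_le_integral_norm _
      _ = M := by
          rw [hM]
          refine integral_congr_ae (Eventually.of_forall fun l => ?_)
          simp only [norm_mul, hE1, one_mul]
  have hgc : Continuous g := by
    rw [hg]
    refine continuous_of_dominated hEmeas
      (fun t => Eventually.of_forall fun lam => ?_) hψ₀1.norm
      (Eventually.of_forall fun lam => (hEct lam).mul continuous_const)
    simp only [norm_mul, hE1, one_mul]
    exact le_refl _
  -- Gaussian weight
  set G : ℝ → ℝ := fun t => Real.exp (-(T ^ 2)⁻¹ * t ^ 2) with hG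
  have hGpos : ∀ t, 0 < G t := fun t => Real.exp_pos _
  have hGle1 : ∀ t, G t ≤ 1 := by
    intro t
    simp only [hG]
    rw [show (1:ℝ) = Real.exp 0 from (Real.exp_zero).symm]
    apply Real.exp_le_exp.2
    have h : 0 ≤ (T ^ 2)⁻¹ * t ^ 2 := by positivity
    linarith
  have hGI : Integrable G volume := by
    simp only [hG]
    exact integrable_exp_neg_mul_sq (by positivity)
  have hgG : Integrable (fun t => G t * ‖g t‖ ^ 2) volume := by
    have hc : Continuous fun t => G t * ‖g t‖ ^ 2 := by
      refine Continuous.mul ?_ ((hgc.norm).pow 2)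
      simp only [hG]
      exact Real.continuous_exp.comp (continuous_const.mul (continuous_pow 2))
    refine Integrable.mono' (hGI.const_mul (M ^ 2)) hc.aestronglyMeasurable
      (Eventually.of_forall fun t => ?_)
    rw [Real.norm_eq_abs, _root_.abs_of_nonneg (mul_nonneg (hGpos t).le (sq_nonneg _))]
    have h1 := hgb t
    have h2 := norm_nonneg (g t)
    have h3 := (hGpos t).le
    have h5 : ‖g t‖ ^ 2 ≤ M ^ 2 := by nlinarith
    nlinarith [mul_le_mul_of_nonneg_right h5 h3]
  -- Step A : restrict to gaussian-weighted integral over ℝ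
  have stepA : (∫ t in Set.Ioc (0:ℝ) T, ‖g t‖ ^ 2)
      ≤ Real.exp 1 * ∫ t, G t * ‖g t‖ ^ 2 := by
    have h1 : (∫ t in Set.Ioc (0:ℝ) T, ‖g t‖ ^ 2)
        ≤ ∫ t in Set.Ioc (0:ℝ) T, Real.exp 1 * (G t * ‖g t‖ ^ 2) := by
      refine integral_mono_of_nonneg (Eventually.of_forall fun t => by positivity)
        ((hgG.const_mul _).restrict) ?_
      refine (ae_restrict_iff' measurableSet_Ioc).2 (Eventually.of_forall fun t ht => ?_)
      have hT2 : (0:ℝ) < T ^ 2 := by positivity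
      have h2 : Real.exp (-1 : ℝ) ≤ G t := by
        simp only [hG]
        apply Real.exp_le_exp.2
        have h4 : t ^ 2 ≤ T ^ 2 := by nlinarith [ht.1, ht.2]
        have h5 := mul_le_mul_of_nonneg_left h4 (inv_nonneg.2 hT2.le)
        rw [inv_mul_cancel₀ hT2.ne'] at h5
        linarith
      have key : (1:ℝ) ≤ Real.exp 1 * G t := by
        have hmul : Real.exp 1 * Real.exp (-1:ℝ) = 1 := by
          rw [← Real.exp_add]; norm_num
        have h6 := mul_le_mul_of_nonneg_left h2 (Real.exp_pos (1:ℝ)).le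
        linarith
      show ‖g t‖ ^ 2 ≤ Real.exp 1 * (G t * ‖g t‖ ^ 2)
      nlinarith [mul_le_mul_of_nonneg_right key (sq_nonneg ‖g t‖)]
    have h3 : (∫ t in Set.Ioc (0:ℝ) T, Real.exp 1 * (G t * ‖g t‖ ^ 2))
        = Real.exp 1 * ∫ t in Set.Ioc (0:ℝ) T, G t * ‖g t‖ ^ 2 :=
      integral_const_mul _ _
    have h4 : (∫ t in Set.Ioc (0:ℝ) T, G t * ‖g t‖ ^ 2) ≤ ∫ t, G t * ‖g t‖ ^ 2 :=
      setIntegral_le_integral hgG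
        (Eventually.of_forall fun t => mul_nonneg (hGpos t).le (sq_nonneg _))
    calc (∫ t in Set.Ioc (0:ℝ) T, ‖g t‖ ^ 2)
        ≤ ∫ t in Set.Ioc (0:ℝ) T, Real.exp 1 * (G t * ‖g t‖ ^ 2) := h1
      _ = Real.exp 1 * ∫ t in Set.Ioc (0:ℝ) T, G t * ‖g t‖ ^ 2 := h3
      _ ≤ Real.exp 1 * ∫ t, G t * ‖g t‖ ^ 2 :=
          mul_le_mul_of_nonneg_left h4 (Real.exp_pos 1).le
  -- the symmetric kernel and the double-variable integrand
  set W : ℝ × ℝ → ℝ :=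
    fun z => Real.exp (-((Real.sqrt z.1 - Real.sqrt z.2) / ε) ^ 2 * T ^ 2 / 4) with hW
  have hWpos : ∀ z, 0 < W z := fun z => Real.exp_pos _
  have hWle1 : ∀ z, W z ≤ 1 := by
    intro z
    simp only [hW]
    rw [show (1:ℝ) = Real.exp 0 from (Real.exp_zero).symm]
    apply Real.exp_le_exp.2
    have h : 0 ≤ ((Real.sqrt z.1 - Real.sqrt z.2) / ε) ^ 2 * T ^ 2 / 4 := by positivity
    linarith
  have hWc : Continuous W := by
    simp only [hW]
    apply Real.continuous_exp.comp
    apply Continuous.div_const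
    refine Continuous.mul ?_ continuous_const
    exact ((((Real.continuous_sqrt.comp continuous_fst).sub
      (Real.continuous_sqrt.comp continuous_snd)).div_const ε).pow 2).neg
  set Φ : ℝ → ℝ × ℝ → ℂ := fun t z =>
    ((G t : ℝ) : ℂ) * ((E z.1 t * ψ₀ z.1) * (starRingEnd ℂ) (E z.2 t * ψ₀ z.2)) with hΦ
  have hpoint : ∀ t, G t * ‖g t‖ ^ 2 = (∫ z, Φ t z ∂(μ.prod μ)).re := by
    intro t
    have h1 : (∫ z, Φ t z ∂(μ.prod μ)) = ((G t : ℝ) : ℂ) * (g t * (starRingEnd ℂ) (g t)) := by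
      simp only [hΦ]
      rw [integral_const_mul]
      congr 1
      rw [integral_prod_mul (fun lam => E lam t * ψ₀ lam)
        (fun lam => (starRingEnd ℂ) (E lam t * ψ₀ lam))]
      rw [hg]
      rw [integral_conj]
    rw [h1]
    have h2 : g t * (starRingEnd ℂ) (g t) = ((‖g t‖ ^ 2 : ℝ) : ℂ) := by
      rw [Complex.mul_conj]
      norm_cast
      rw [Complex.normSq_eq_norm_sq]
    rw [h2, ← Complex.ofReal_mul, Complex.ofReal_re]
  have hsqrtm : Measurable Real.sqrt := Real.continuous_sqrt.measurable
  have hph1 : Measurable fun p : ℝ × (ℝ × ℝ) => Real.sqrt p.2.1 * p.1 / ε :=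
    ((hsqrtm.comp (measurable_fst.comp measurable_snd)).mul measurable_fst).div_const ε
  have hph2 : Measurable fun p : ℝ × (ℝ × ℝ) => Real.sqrt p.2.2 * p.1 / ε :=
    ((hsqrtm.comp (measurable_snd.comp measurable_snd)).mul measurable_fst).div_const ε
  have hexp1 : Measurable fun p : ℝ × (ℝ × ℝ) =>
      Complex.exp (Complex.I * ((Real.sqrt p.2.1 * p.1 / ε : ℝ) : ℂ)) :=
    Complex.measurable_exp.comp ((Complex.measurable_ofReal.comp hph1).const_mul Complex.I)
  have hexp2 : Measurable fun p : ℝ × (ℝ × ℝ) =>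
      Complex.exp (Complex.I * ((Real.sqrt p.2.2 * p.1 / ε : ℝ) : ℂ)) :=
    Complex.measurable_exp.comp ((Complex.measurable_ofReal.comp hph2).const_mul Complex.I)
  have hGm : Measurable fun p : ℝ × (ℝ × ℝ) => ((Real.exp (-(T ^ 2)⁻¹ * p.1 ^ 2) : ℝ) : ℂ) :=
    Complex.measurable_ofReal.comp
      (Real.measurable_exp.comp ((measurable_fst.pow_const 2).const_mul (-(T ^ 2)⁻¹)))
  have hΦmeas : Measurable (Function.uncurry Φ) := by
    simp only [hΦ, hE, hG, Function.uncurry]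
    exact hGm.mul ((hexp1.mul (hψmeas.comp (measurable_fst.comp measurable_snd))).mul
      (continuous_star.measurable.comp
        (hexp2.mul (hψmeas.comp (measurable_snd.comp measurable_snd)))))
  have hΦnorm : ∀ t z, ‖Φ t z‖ = G t * (‖ψ₀ z.1‖ * ‖ψ₀ z.2‖) := by
    intro t z
    simp only [hΦ]
    rw [norm_mul, norm_mul, RCLike.norm_conj, norm_mul, norm_mul, hE1, hE1,
      Complex.norm_real, Real.norm_eq_abs, _root_.abs_of_pos (hGpos t)]
    ring
  have hΦint : Integrable (Function.uncurry Φ) (volume.prod (μ.prod μ)) := by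
    have hbd : Integrable (fun p : ℝ × (ℝ × ℝ) => G p.1 * (‖ψ₀ p.2.1‖ * ‖ψ₀ p.2.2‖))
        (volume.prod (μ.prod μ)) := hGI.mul_prod ((hψ₀1.norm).mul_prod (hψ₀1.norm))
    refine hbd.mono' hΦmeas.aestronglyMeasurable (Eventually.of_forall fun p => ?_)
    exact le_of_eq (hΦnorm p.1 p.2)
  -- Step B : Fubini and the Gaussian Fourier transform
  have stepB1 : (∫ t, G t * ‖g t‖ ^ 2) = (∫ z, (∫ t, Φ t z) ∂(μ.prod μ)).re := by
    have h1 : Integrable (fun t => ∫ z, Φ t z ∂(μ.prod μ)) volume := hΦint.integral_prod_left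
    calc (∫ t, G t * ‖g t‖ ^ 2) = ∫ t, (∫ z, Φ t z ∂(μ.prod μ)).re :=
          integral_congr_ae (Eventually.of_forall hpoint)
      _ = (∫ t, ∫ z, Φ t z ∂(μ.prod μ)).re :=
          ContinuousLinearMap.integral_comp_comm Complex.reCLM h1
      _ = (∫ z, (∫ t, Φ t z) ∂(μ.prod μ)).re := by
          rw [integral_integral_swap hΦint]
  have hIntT : ∀ z : ℝ × ℝ, (∫ t, Φ t z)
      = ((Real.sqrt π * T : ℝ) : ℂ) * ((W z : ℝ) : ℂ)
        * (ψ₀ z.1 * (starRingEnd ℂ) (ψ₀ z.2)) := by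
    intro z
    have hform : ∀ t : ℝ, Φ t z
        = ((G t : ℝ) : ℂ)
          * Complex.exp (Complex.I * ((((Real.sqrt z.1 - Real.sqrt z.2) / ε) * t : ℝ) : ℂ))
          * (ψ₀ z.1 * (starRingEnd ℂ) (ψ₀ z.2)) := by
      intro t
      simp only [hΦ, hE]
      rw [map_mul, ← Complex.exp_conj]
      rw [show (starRingEnd ℂ) (Complex.I * ((Real.sqrt z.2 * t / ε : ℝ) : ℂ))
          = -(Complex.I * ((Real.sqrt z.2 * t / ε : ℝ) : ℂ)) from by
        rw [map_mul, Complex.conj_I, Complex.conj_ofReal]; ring]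
      rw [show Complex.I * ((((Real.sqrt z.1 - Real.sqrt z.2) / ε) * t : ℝ) : ℂ)
          = Complex.I * ((Real.sqrt z.1 * t / ε : ℝ) : ℂ)
            + -(Complex.I * ((Real.sqrt z.2 * t / ε : ℝ) : ℂ)) from by push_cast; ring]
      rw [Complex.exp_add]
      ring
    calc (∫ t, Φ t z)
        = ∫ t, ((G t : ℝ) : ℂ)
            * Complex.exp (Complex.I * ((((Real.sqrt z.1 - Real.sqrt z.2) / ε) * t : ℝ) : ℂ))
            * (ψ₀ z.1 * (starRingEnd ℂ) (ψ₀ z.2)) :=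
          integral_congr_ae (Eventually.of_forall hform)
      _ = (∫ t, ((G t : ℝ) : ℂ)
            * Complex.exp (Complex.I * ((((Real.sqrt z.1 - Real.sqrt z.2) / ε) * t : ℝ) : ℂ)))
            * (ψ₀ z.1 * (starRingEnd ℂ) (ψ₀ z.2)) := integral_mul_const _ _
      _ = _ := by
          simp only [hG]
          rw [gauss_comp T ε hT hε ((Real.sqrt z.1 - Real.sqrt z.2) / ε)]
  have hnormT : ∀ z : ℝ × ℝ,
      ‖∫ t, Φ t z‖ = (Real.sqrt π * T) * (W z * (‖ψ₀ z.1‖ * ‖ψ₀ z.2‖)) := by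
    intro z
    rw [hIntT z, norm_mul, norm_mul, norm_mul, RCLike.norm_conj,
      Complex.norm_real, Complex.norm_real, Real.norm_eq_abs, Real.norm_eq_abs,
      _root_.abs_of_nonneg (mul_nonneg (Real.sqrt_nonneg π) hT.le), _root_.abs_of_pos (hWpos z)]
    ring
  have stepB2 : (∫ z, (∫ t, Φ t z) ∂(μ.prod μ)).re
      ≤ (Real.sqrt π * T) * ∫ z, W z * (‖ψ₀ z.1‖ * ‖ψ₀ z.2‖) ∂(μ.prod μ) := by
    calc (∫ z, (∫ t, Φ t z) ∂(μ.prod μ)).re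
        ≤ ‖∫ z, (∫ t, Φ t z) ∂(μ.prod μ)‖ :=
          Complex.re_le_norm _
      _ ≤ ∫ z, ‖∫ t, Φ t z‖ ∂(μ.prod μ) := norm_integral_le_integral_norm _
      _ = ∫ z, (Real.sqrt π * T) * (W z * (‖ψ₀ z.1‖ * ‖ψ₀ z.2‖)) ∂(μ.prod μ) :=
          integral_congr_ae (Eventually.of_forall hnormT)
      _ = (Real.sqrt π * T) * ∫ z, W z * (‖ψ₀ z.1‖ * ‖ψ₀ z.2‖) ∂(μ.prod μ) :=
          integral_const_mul _ _
  -- Step C : Cauchy-Schwarz by symmetry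
  have hm12 : Measurable fun z : ℝ × ℝ => ‖ψ₀ z.1‖ ^ 2 :=
    ((hψmeas.comp measurable_fst).norm).pow_const 2
  have hm22 : Measurable fun z : ℝ × ℝ => ‖ψ₀ z.2‖ ^ 2 :=
    ((hψmeas.comp measurable_snd).norm).pow_const 2
  have hprod1 : Integrable (fun z : ℝ × ℝ => ‖ψ₀ z.1‖ ^ 2) (μ.prod μ) := by
    simpa using hψ₀2.mul_prod (integrable_const (1:ℝ))
  have hprod2 : Integrable (fun z : ℝ × ℝ => ‖ψ₀ z.2‖ ^ 2) (μ.prod μ) := by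
    simpa using (integrable_const (1:ℝ)).mul_prod hψ₀2
  have hWψ1 : Integrable (fun z => W z * ‖ψ₀ z.1‖ ^ 2) (μ.prod μ) := by
    refine hprod1.mono' ((hWc.measurable.mul hm12).aestronglyMeasurable)
      (Eventually.of_forall fun z => ?_)
    rw [Real.norm_eq_abs,
      _root_.abs_of_nonneg (mul_nonneg (hWpos z).le (sq_nonneg _))]
    nlinarith [sq_nonneg ‖ψ₀ z.1‖, (hWpos z).le, hWle1 z]
  have hWψ2 : Integrable (fun z => W z * ‖ψ₀ z.2‖ ^ 2) (μ.prod μ) := by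
    refine hprod2.mono' ((hWc.measurable.mul hm22).aestronglyMeasurable)
      (Eventually.of_forall fun z => ?_)
    rw [Real.norm_eq_abs,
      _root_.abs_of_nonneg (mul_nonneg (hWpos z).le (sq_nonneg _))]
    nlinarith [sq_nonneg ‖ψ₀ z.2‖, (hWpos z).le, hWle1 z]
  have hswapW : (∫ z, W z * ‖ψ₀ z.2‖ ^ 2 ∂(μ.prod μ))
      = ∫ z, W z * ‖ψ₀ z.1‖ ^ 2 ∂(μ.prod μ) := by
    rw [← integral_prod_swap (fun z : ℝ × ℝ => W z * ‖ψ₀ z.2‖ ^ 2)]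
    refine integral_congr_ae (Eventually.of_forall fun z => ?_)
    show W z.swap * ‖ψ₀ z.swap.2‖ ^ 2 = W z * ‖ψ₀ z.1‖ ^ 2
    have h1 : W z.swap = W z := by
      simp only [hW, Prod.fst_swap, Prod.snd_swap]
      congr 1
      ring
    rw [h1, Prod.snd_swap]
  have hCS : (∫ z, W z * (‖ψ₀ z.1‖ * ‖ψ₀ z.2‖) ∂(μ.prod μ))
      ≤ ∫ z, W z * ‖ψ₀ z.1‖ ^ 2 ∂(μ.prod μ) := by
    have hhalf : (∫ z, W z * (‖ψ₀ z.1‖ * ‖ψ₀ z.2‖) ∂(μ.prod μ))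
        ≤ ∫ z, (W z * ‖ψ₀ z.1‖ ^ 2 + W z * ‖ψ₀ z.2‖ ^ 2) / 2 ∂(μ.prod μ) := by
      refine integral_mono_of_nonneg
        (Eventually.of_forall fun z =>
          mul_nonneg (hWpos z).le (mul_nonneg (norm_nonneg _) (norm_nonneg _)))
        ((hWψ1.add hWψ2).div_const 2)
        (Eventually.of_forall fun z => ?_)
      nlinarith [mul_nonneg (hWpos z).le (sq_nonneg (‖ψ₀ z.1‖ - ‖ψ₀ z.2‖))]
    have hadd : (∫ z, (W z * ‖ψ₀ z.1‖ ^ 2 + W z * ‖ψ₀ z.2‖ ^ 2) / 2 ∂(μ.prod μ))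
        = ((∫ z, W z * ‖ψ₀ z.1‖ ^ 2 ∂(μ.prod μ))
            + ∫ z, W z * ‖ψ₀ z.2‖ ^ 2 ∂(μ.prod μ)) / 2 := by
      rw [integral_div, integral_add hWψ1 hWψ2]
    rw [hadd, hswapW] at hhalf
    linarith
  -- Step D : Fubini and the band bound
  have hFub : (∫ z, W z * ‖ψ₀ z.1‖ ^ 2 ∂(μ.prod μ))
      = ∫ x, (∫ y, W (x, y) ∂μ) * ‖ψ₀ x‖ ^ 2 ∂μ := by
    rw [integral_prod _ hWψ1]
    refine integral_congr_ae (Eventually.of_forall fun x => ?_)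
    show (∫ y, W (x, y) * ‖ψ₀ x‖ ^ 2 ∂μ) = (∫ y, W (x, y) ∂μ) * ‖ψ₀ x‖ ^ 2
    exact integral_mul_const _ _
  have hinner : ∀ᵐ x ∂μ, (∫ y, W (x, y) ∂μ) ≤ C₀ * ε * Sc T := by
    filter_upwards [haemem] with x hx
    have hs0 : 0 ≤ Real.sqrt x := Real.sqrt_nonneg _
    have hsb : Real.sqrt x ≤ Real.sqrt b := Real.sqrt_le_sqrt hx.2
    have hk := kernel_integral_bound C₀ T ε hC₀ hT hε μ a b hsupp hband (Real.sqrt x) hs0 hsb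
    refine le_trans (le_of_eq ?_) hk
    refine integral_congr_ae (Eventually.of_forall fun y => ?_)
    simp only [hW]
    congr 1
    ring
  have stepD : (∫ x, (∫ y, W (x, y) ∂μ) * ‖ψ₀ x‖ ^ 2 ∂μ)
      ≤ (C₀ * ε * Sc T) * ∫ x, ‖ψ₀ x‖ ^ 2 ∂μ := by
    rw [← integral_const_mul]
    refine integral_mono_of_nonneg
      (Eventually.of_forall fun x =>
        mul_nonneg (integral_nonneg fun y => (hWpos _).le) (sq_nonneg _))
      (hψ₀2.const_mul _) ?_
    filter_upwards [hinner] with x hx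
    exact mul_le_mul_of_nonneg_right hx (sq_nonneg _)
  -- final assembly
  have hψsq : 0 ≤ ∫ lam, ‖ψ₀ lam‖ ^ 2 ∂μ := integral_nonneg fun l => sq_nonneg _
  have hWker : 0 ≤ ∫ z, W z * (‖ψ₀ z.1‖ * ‖ψ₀ z.2‖) ∂(μ.prod μ) :=
    integral_nonneg fun z =>
      mul_nonneg (hWpos z).le (mul_nonneg (norm_nonneg _) (norm_nonneg _))
  have main : (∫ t in Set.Ioc (0:ℝ) T, ‖g t‖ ^ 2)
      ≤ Real.exp 1 * ((Real.sqrt π * T) * ((C₀ * ε * Sc T) * ∫ lam, ‖ψ₀ lam‖ ^ 2 ∂μ)) := by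
    calc (∫ t in Set.Ioc (0:ℝ) T, ‖g t‖ ^ 2)
        ≤ Real.exp 1 * ∫ t, G t * ‖g t‖ ^ 2 := stepA
      _ = Real.exp 1 * (∫ z, (∫ t, Φ t z) ∂(μ.prod μ)).re := by rw [stepB1]
      _ ≤ Real.exp 1 * ((Real.sqrt π * T)
            * ∫ z, W z * (‖ψ₀ z.1‖ * ‖ψ₀ z.2‖) ∂(μ.prod μ)) :=
          mul_le_mul_of_nonneg_left stepB2 (Real.exp_pos 1).le
      _ ≤ Real.exp 1 * ((Real.sqrt π * T)
            * ((C₀ * ε * Sc T) * ∫ lam, ‖ψ₀ lam‖ ^ 2 ∂μ)) := by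
          refine mul_le_mul_of_nonneg_left ?_ (Real.exp_pos 1).le
          refine mul_le_mul_of_nonneg_left ?_
            (mul_nonneg (Real.sqrt_nonneg π) hT.le)
          calc (∫ z, W z * (‖ψ₀ z.1‖ * ‖ψ₀ z.2‖) ∂(μ.prod μ))
              ≤ ∫ z, W z * ‖ψ₀ z.1‖ ^ 2 ∂(μ.prod μ) := hCS
            _ = ∫ x, (∫ y, W (x, y) ∂μ) * ‖ψ₀ x‖ ^ 2 ∂μ := hFub
            _ ≤ (C₀ * ε * Sc T) * ∫ x, ‖ψ₀ x‖ ^ 2 ∂μ := stepD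
  refine main.trans ?_
  nlinarith [mul_nonneg hε.le hψsq, (Real.exp_pos (1:ℝ)).le, Real.sqrt_nonneg π,
    mul_nonneg (mul_nonneg (Real.exp_pos (1:ℝ)).le (mul_nonneg (Real.sqrt_nonneg π) hT.le))
      (mul_nonneg hC₀ hSc)]
end
end

section
/- Let T > 0 and let g : ℝ → ℂ be of the form g(t) = ∫_{[a,b]} e^{iλt} h(λ) dν(λ) for a finite Borel measure ν on [a,b] ⊂ ℝ and h ∈ L²(ν). Then ∫₀^T |g(t)|² dt ≤ e √π T ∬ h(x) conj(h(y)) exp(−T²(x − y)²/4) dν(x) dν(y), where the right-hand double integral is real and nonnegative. -/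
open MeasureTheory Complex

noncomputable section

namespace Stmt18

lemma gauss_int {T : ℝ} (hT : 0 < T) (c : ℝ) :
    (∫ s : ℝ, Complex.exp (Complex.I * (c : ℂ) * (s : ℂ)) *
        Complex.exp (-((((T ^ 2)⁻¹ : ℝ)) : ℂ) * (s : ℂ) ^ 2)) =
      ((Real.sqrt Real.pi * T : ℝ) : ℂ) * ((Real.exp (-(T ^ 2 * c ^ 2) / 4) : ℝ) : ℂ) := by
  have hT2 : (0 : ℝ) < T ^ 2 := by positivity
  have hb : (0 : ℝ) < ((((T ^ 2)⁻¹ : ℝ)) : ℂ).re := by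
    rw [Complex.ofReal_re]; positivity
  rw [fourierIntegral_gaussian hb (c : ℂ)]
  congr 1
  · have h1 : ((Real.pi : ℂ)) / ((((T ^ 2)⁻¹ : ℝ)) : ℂ) = ((Real.pi * T ^ 2 : ℝ) : ℂ) := by
      push_cast
      field_simp
    have h2 : ((1 : ℂ) / 2) = (((1 : ℝ) / 2 : ℝ) : ℂ) := by norm_num
    rw [h1, h2, ← Complex.ofReal_cpow (by positivity)]
    rw [← Real.sqrt_eq_rpow, Real.sqrt_mul Real.pi_pos.le, Real.sqrt_sq hT.le]
  · have harg : (-(c : ℂ) ^ 2 / (4 * ((((T ^ 2)⁻¹ : ℝ)) : ℂ))) =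
        ((-(T ^ 2 * c ^ 2) / 4 : ℝ) : ℂ) := by
      have hT0 : (T : ℝ) ≠ 0 := hT.ne'
      push_cast
      field_simp
    rw [harg, Complex.ofReal_exp]

lemma key {T : ℝ} (hT : 0 < T) (μ : Measure ℝ) [IsFiniteMeasure μ]
    (h : ℝ → ℂ) (hm : StronglyMeasurable h) (hi : Integrable h μ) :
    ((Real.sqrt Real.pi * T : ℝ) : ℂ) *
      (∫ x, ∫ y, h x * (starRingEnd ℂ) (h y) *
          ((Real.exp (-(T ^ 2 * (x - y) ^ 2) / 4) : ℝ) : ℂ) ∂μ ∂μ)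
    = (((∫ t : ℝ, Real.exp (-(T ^ 2)⁻¹ * t ^ 2) *
        ‖∫ lam, Complex.exp (Complex.I * ((lam * t : ℝ) : ℂ)) * h lam ∂μ‖ ^ 2) : ℝ) : ℂ) := by
  have hmeas : Measurable h := hm.measurable
  set g : ℝ → ℂ := fun t => ∫ lam, Complex.exp (Complex.I * ((lam * t : ℝ) : ℂ)) * h lam ∂μ
    with hg
  set w : ℝ → ℝ := fun t => Real.exp (-(T ^ 2)⁻¹ * t ^ 2) with hw
  have hwint : Integrable w volume := by
    simpa [hw] using integrable_exp_neg_mul_sq (inv_pos.mpr (pow_pos hT 2))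
  set f : ℝ → ℝ × ℝ → ℂ := fun t p =>
    (w t : ℂ) * (Complex.exp (Complex.I * ((p.1 * t : ℝ) : ℂ)) * h p.1 *
      (Complex.exp (-(Complex.I * ((p.2 * t : ℝ) : ℂ))) * (starRingEnd ℂ) (h p.2))) with hf
  -- measurability
  have hFm : AEStronglyMeasurable (Function.uncurry f) (volume.prod (μ.prod μ)) := by
    apply Measurable.aestronglyMeasurable
    unfold Function.uncurry
    simp only [hf, hw, starRingEnd_apply]
    have m1 : Measurable fun z : ℝ × (ℝ × ℝ) =>
        ((Real.exp (-(T ^ 2)⁻¹ * z.1 ^ 2) : ℝ) : ℂ) :=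
      Complex.measurable_ofReal.comp
        (Real.measurable_exp.comp ((measurable_fst.pow_const 2).const_mul _))
    have m2 : Measurable fun z : ℝ × (ℝ × ℝ) =>
        Complex.exp (Complex.I * ((z.2.1 * z.1 : ℝ) : ℂ)) :=
      Complex.measurable_exp.comp
        (measurable_const.mul
          (Complex.measurable_ofReal.comp (measurable_snd.fst.mul measurable_fst)))
    have m3 : Measurable fun z : ℝ × (ℝ × ℝ) => h z.2.1 := hmeas.comp measurable_snd.fst
    have m4 : Measurable fun z : ℝ × (ℝ × ℝ) =>
        Complex.exp (-(Complex.I * ((z.2.2 * z.1 : ℝ) : ℂ))) :=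
      Complex.measurable_exp.comp
        ((measurable_const.mul
          (Complex.measurable_ofReal.comp (measurable_snd.snd.mul measurable_fst))).neg)
    have m5 : Measurable fun z : ℝ × (ℝ × ℝ) => star (h z.2.2) :=
      continuous_star.measurable.comp (hmeas.comp measurable_snd.snd)
    exact m1.mul ((m2.mul m3).mul (m4.mul m5))
  -- integrability on the product
  have hq : Integrable (fun p : ℝ × ℝ => ‖h p.1‖ * ‖h p.2‖) (μ.prod μ) :=
    hi.norm.mul_prod hi.norm
  have hbound : Integrable (fun z : ℝ × (ℝ × ℝ) => w z.1 * (‖h z.2.1‖ * ‖h z.2.2‖))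
      (volume.prod (μ.prod μ)) := hwint.mul_prod hq
  have e1 : ∀ r : ℝ, ‖Complex.exp (Complex.I * (r : ℂ))‖ = 1 := by
    intro r; simp [Complex.norm_exp]
  have e2 : ∀ r : ℝ, ‖Complex.exp (-(Complex.I * (r : ℂ)))‖ = 1 := by
    intro r; simp [Complex.norm_exp]
  have hnorm : ∀ z : ℝ × (ℝ × ℝ),
      ‖Function.uncurry f z‖ = w z.1 * (‖h z.2.1‖ * ‖h z.2.2‖) := by
    intro z
    simp only [Function.uncurry, hf, norm_mul, e1, e2, RCLike.norm_conj]
    rw [Complex.norm_real, Real.norm_eq_abs,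
      abs_of_pos (show (0:ℝ) < w z.1 from Real.exp_pos _)]
    ring
  have hFi : Integrable (Function.uncurry f) (volume.prod (μ.prod μ)) := by
    refine hbound.mono' hFm (Filter.Eventually.of_forall fun z => ?_)
    rw [hnorm z]
  -- step A
  have hA : ∀ t : ℝ, (w t : ℂ) * (g t * (starRingEnd ℂ) (g t)) = ∫ p, f t p ∂(μ.prod μ) := by
    intro t
    have h1 : (starRingEnd ℂ) (g t) =
        ∫ y, Complex.exp (-(Complex.I * ((y * t : ℝ) : ℂ))) * (starRingEnd ℂ) (h y) ∂μ := by
      rw [hg, ← integral_conj]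
      congr 1
      ext y
      rw [map_mul, ← Complex.exp_conj]
      congr 2
      simp [Complex.conj_I]
    rw [h1]
    rw [show g t = ∫ x, Complex.exp (Complex.I * ((x * t : ℝ) : ℂ)) * h x ∂μ from rfl]
    rw [← integral_prod_mul (fun x => Complex.exp (Complex.I * ((x * t : ℝ) : ℂ)) * h x)
      (fun y => Complex.exp (-(Complex.I * ((y * t : ℝ) : ℂ))) * (starRingEnd ℂ) (h y))]
    rw [← integral_const_mul]
  -- step C : inner time integral
  have hC : ∀ p : ℝ × ℝ, (∫ t, f t p) = ((Real.sqrt Real.pi * T : ℝ) : ℂ) *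
      (h p.1 * (starRingEnd ℂ) (h p.2) *
        ((Real.exp (-(T ^ 2 * (p.1 - p.2) ^ 2) / 4) : ℝ) : ℂ)) := by
    intro p
    have hptwise : ∀ t : ℝ, f t p = (h p.1 * (starRingEnd ℂ) (h p.2)) *
        (Complex.exp (Complex.I * ((p.1 - p.2 : ℝ) : ℂ) * (t : ℂ)) *
         Complex.exp (-((((T ^ 2)⁻¹ : ℝ)) : ℂ) * (t : ℂ) ^ 2)) := by
      intro t
      have e1 : (w t : ℂ) = Complex.exp (-((((T ^ 2)⁻¹ : ℝ)) : ℂ) * (t : ℂ) ^ 2) := by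
        show ((Real.exp (-(T ^ 2)⁻¹ * t ^ 2) : ℝ) : ℂ) = _
        rw [Complex.ofReal_exp]
        congr 1
        push_cast
        ring
      have e2 : Complex.exp (Complex.I * ((p.1 * t : ℝ) : ℂ)) *
          Complex.exp (-(Complex.I * ((p.2 * t : ℝ) : ℂ))) =
          Complex.exp (Complex.I * ((p.1 - p.2 : ℝ) : ℂ) * (t : ℂ)) := by
        rw [← Complex.exp_add]
        congr 1
        push_cast
        ring
      simp only [hf]
      rw [e1, ← e2]
      ring
    simp_rw [hptwise]
    rw [integral_const_mul, gauss_int hT (p.1 - p.2)]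
    ring
  -- integrability of the Gaussian-kernel integrand on μ.prod μ
  have hKi : Integrable (fun p : ℝ × ℝ => h p.1 * (starRingEnd ℂ) (h p.2) *
      ((Real.exp (-(T ^ 2 * (p.1 - p.2) ^ 2) / 4) : ℝ) : ℂ)) (μ.prod μ) := by
    refine hq.mono' ?_ (Filter.Eventually.of_forall fun p => ?_)
    · apply Measurable.aestronglyMeasurable
      simp only [starRingEnd_apply]
      have m6 : Measurable fun p : ℝ × ℝ =>
          ((Real.exp (-(T ^ 2 * (p.1 - p.2) ^ 2) / 4) : ℝ) : ℂ) :=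
        Complex.measurable_ofReal.comp
          (Real.measurable_exp.comp
            ((((measurable_fst.sub measurable_snd).pow_const 2).const_mul
              (T ^ 2)).neg.div_const 4))
      exact ((hmeas.comp measurable_fst).mul
        (continuous_star.measurable.comp (hmeas.comp measurable_snd))).mul m6
    · rw [norm_mul, norm_mul]
      simp only [Complex.norm_real, Real.norm_eq_abs, RCLike.norm_conj]
      rw [abs_of_pos (Real.exp_pos _)]
      have h1 : Real.exp (-(T ^ 2 * (p.1 - p.2) ^ 2) / 4) ≤ 1 := by
        rw [Real.exp_le_one_iff]
        nlinarith [sq_nonneg (p.1 - p.2), sq_nonneg T]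
      calc ‖h p.1‖ * ‖h p.2‖ * Real.exp (-(T ^ 2 * (p.1 - p.2) ^ 2) / 4)
          ≤ ‖h p.1‖ * ‖h p.2‖ * 1 := by
            apply mul_le_mul_of_nonneg_left h1 (by positivity)
        _ = ‖h p.1‖ * ‖h p.2‖ := by simp
  -- main chain
  calc ((Real.sqrt Real.pi * T : ℝ) : ℂ) *
      (∫ x, ∫ y, h x * (starRingEnd ℂ) (h y) *
          ((Real.exp (-(T ^ 2 * (x - y) ^ 2) / 4) : ℝ) : ℂ) ∂μ ∂μ)
      = ((Real.sqrt Real.pi * T : ℝ) : ℂ) *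
        ∫ p, h p.1 * (starRingEnd ℂ) (h p.2) *
          ((Real.exp (-(T ^ 2 * (p.1 - p.2) ^ 2) / 4) : ℝ) : ℂ) ∂(μ.prod μ) := by
        rw [integral_prod _ hKi]
    _ = ∫ p, ((Real.sqrt Real.pi * T : ℝ) : ℂ) *
          (h p.1 * (starRingEnd ℂ) (h p.2) *
            ((Real.exp (-(T ^ 2 * (p.1 - p.2) ^ 2) / 4) : ℝ) : ℂ)) ∂(μ.prod μ) := by
        rw [integral_const_mul]
    _ = ∫ p : ℝ × ℝ, (∫ t : ℝ, f t p) ∂(μ.prod μ) := by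
        exact integral_congr_ae (Filter.Eventually.of_forall fun p => (hC p).symm)
    _ = ∫ t : ℝ, ∫ p, f t p ∂(μ.prod μ) := (integral_integral_swap hFi).symm
    _ = ∫ t, (w t : ℂ) * (g t * (starRingEnd ℂ) (g t)) := by
        exact integral_congr_ae (Filter.Eventually.of_forall fun t => (hA t).symm)
    _ = ∫ t, ((w t * ‖g t‖ ^ 2 : ℝ) : ℂ) := by
        congr 1
        ext t
        rw [Complex.mul_conj, Complex.normSq_eq_norm_sq]
        push_cast
        ring
    _ = (((∫ t : ℝ, w t * ‖g t‖ ^ 2) : ℝ) : ℂ) := by with_unfolding_all exact integral_ofReal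

end Stmt18

end

open Stmt18 in
/-- Gaussian-regularized Plancherel inequality (Last's lemma): for
`g(t) = ∫_{[a,b]} e^{iλt} h(λ) dν(λ)` with `h ∈ L²(ν)`,
`∫₀^T |g|² dt ≤ e √π T ∬ h(x) conj(h(y)) exp(−T²(x−y)²/4) dν dν`, the double
integral being real and nonnegative. -/
theorem stmt18 (a b T : ℝ) (hab : a ≤ b) (hT : 0 < T)
    (ν : Measure ℝ) [IsFiniteMeasure ν] (h : ℝ → ℂ) (hh : MemLp h 2 ν) :
    (∫ x in Set.Icc a b, ∫ y in Set.Icc a b,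
        h x * (starRingEnd ℂ) (h y) *
          ((Real.exp (-(T ^ 2 * (x - y) ^ 2) / 4) : ℝ) : ℂ) ∂ν ∂ν).im = 0 ∧
    0 ≤ (∫ x in Set.Icc a b, ∫ y in Set.Icc a b,
        h x * (starRingEnd ℂ) (h y) *
          ((Real.exp (-(T ^ 2 * (x - y) ^ 2) / 4) : ℝ) : ℂ) ∂ν ∂ν).re ∧
    (∫ t in (0 : ℝ)..T,
        ‖∫ lam in Set.Icc a b,
            Complex.exp (Complex.I * ((lam * t : ℝ) : ℂ)) * h lam ∂ν‖ ^ 2)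
      ≤ Real.exp 1 * Real.sqrt Real.pi * T *
          (∫ x in Set.Icc a b, ∫ y in Set.Icc a b,
            h x * (starRingEnd ℂ) (h y) *
              ((Real.exp (-(T ^ 2 * (x - y) ^ 2) / 4) : ℝ) : ℂ) ∂ν ∂ν).re := by
  classical
  set μ : Measure ℝ := ν.restrict (Set.Icc a b) with hμ
  obtain ⟨h', hm', hae⟩ : ∃ h' : ℝ → ℂ, StronglyMeasurable h' ∧ h =ᵐ[ν] h' :=
    ⟨hh.1.mk h, hh.1.stronglyMeasurable_mk, hh.1.ae_eq_mk⟩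
  have haeμ : h =ᵐ[μ] h' := ae_restrict_of_ae hae
  have hi : Integrable h' μ := ((hh.integrable one_le_two).congr hae).restrict
  set K : ℂ := ∫ x, ∫ y, h x * (starRingEnd ℂ) (h y) *
      ((Real.exp (-(T ^ 2 * (x - y) ^ 2) / 4) : ℝ) : ℂ) ∂μ ∂μ with hK
  have hKeq : K = ∫ x, ∫ y, h' x * (starRingEnd ℂ) (h' y) *
      ((Real.exp (-(T ^ 2 * (x - y) ^ 2) / 4) : ℝ) : ℂ) ∂μ ∂μ := by
    rw [hK]
    apply integral_congr_ae
    filter_upwards [haeμ] with x hx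
    apply integral_congr_ae
    filter_upwards [haeμ] with y hy
    rw [hx, hy]
  set g' : ℝ → ℂ := fun t => ∫ lam, Complex.exp (Complex.I * ((lam * t : ℝ) : ℂ)) * h' lam ∂μ
    with hg'
  have hgeq : ∀ t : ℝ,
      (∫ lam, Complex.exp (Complex.I * ((lam * t : ℝ) : ℂ)) * h lam ∂μ) = g' t := by
    intro t
    apply integral_congr_ae
    filter_upwards [haeμ] with lam hl
    rw [hl]
  set w : ℝ → ℝ := fun t => Real.exp (-(T ^ 2)⁻¹ * t ^ 2) with hw
  set R : ℝ := ∫ t : ℝ, w t * ‖g' t‖ ^ 2 with hR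
  have hid : ((Real.sqrt Real.pi * T : ℝ) : ℂ) * K = ((R : ℝ) : ℂ) := by
    rw [hKeq]
    exact key hT μ h' hm' hi
  have hrpos : (0 : ℝ) < Real.sqrt Real.pi * T :=
    mul_pos (Real.sqrt_pos.mpr Real.pi_pos) hT
  have hRnn : 0 ≤ R := integral_nonneg fun t => by positivity
  have him : K.im = 0 := by
    have h4 : Real.sqrt Real.pi * T * K.im = 0 := by
      simpa [Complex.mul_im] using congrArg Complex.im hid
    exact (mul_eq_zero.mp h4).resolve_left hrpos.ne'
  have hre : Real.sqrt Real.pi * T * K.re = R := by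
    have := congrArg Complex.re hid
    simpa [Complex.mul_re, Complex.ofReal_re, Complex.ofReal_im] using this
  have hKre : 0 ≤ K.re := by nlinarith [hrpos, hRnn, hre]
  refine ⟨him, hKre, ?_⟩
  -- analytic bound
  have e1 : ∀ r : ℝ, ‖Complex.exp (Complex.I * (r : ℂ))‖ = 1 := by
    intro r; simp [Complex.norm_exp]
  have hwint : Integrable w volume := by
    simpa [hw] using integrable_exp_neg_mul_sq (inv_pos.mpr (pow_pos hT 2))
  have hwc : Continuous w := by
    rw [hw]
    exact Real.continuous_exp.comp (continuous_const.mul (continuous_pow 2))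
  have hgc : Continuous g' := by
    rw [hg']
    apply continuous_of_dominated (bound := fun lam => ‖h' lam‖)
    · intro t
      apply Measurable.aestronglyMeasurable
      exact (Complex.measurable_exp.comp (measurable_const.mul
        (Complex.measurable_ofReal.comp (measurable_id.mul_const t)))).mul hm'.measurable
    · intro t
      filter_upwards with lam
      rw [norm_mul, e1]
      simp
    · exact hi.norm
    · filter_upwards with lam
      apply Continuous.mul _ continuous_const
      apply Complex.continuous_exp.comp
      exact continuous_const.mul (Complex.continuous_ofReal.comp
        (continuous_const.mul continuous_id))
  set M : ℝ := ∫ lam, ‖h' lam‖ ∂μ with hM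
  have hgM : ∀ t : ℝ, ‖g' t‖ ≤ M := by
    intro t
    refine (norm_integral_le_integral_norm _).trans (le_of_eq ?_)
    apply integral_congr_ae
    filter_upwards with lam
    rw [norm_mul, e1, one_mul]
  have hwg_int : Integrable (fun t => w t * ‖g' t‖ ^ 2) volume := by
    refine Integrable.mono' (hwint.const_mul (M ^ 2)) ?_
      (Filter.Eventually.of_forall fun t => ?_)
    · exact (hwc.mul ((hgc.norm).pow 2)).aestronglyMeasurable
    · have h1 : ‖g' t‖ ^ 2 ≤ M ^ 2 := by
        have := hgM t
        nlinarith [norm_nonneg (g' t)]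
      have h2 : (0:ℝ) ≤ w t := (Real.exp_pos _).le
      rw [Real.norm_eq_abs, _root_.abs_of_nonneg (by positivity)]
      nlinarith
  have hstep0 : (∫ t in (0:ℝ)..T,
      ‖∫ lam, Complex.exp (Complex.I * ((lam * t : ℝ) : ℂ)) * h lam ∂μ‖ ^ 2)
      = ∫ t in (0:ℝ)..T, ‖g' t‖ ^ 2 :=
    intervalIntegral.integral_congr fun t _ => by rw [hgeq t]
  rw [hstep0, intervalIntegral.integral_of_le hT.le]
  have hintC : IntegrableOn (fun t => ‖g' t‖ ^ 2) (Set.Ioc 0 T) volume :=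
    ((hgc.norm.pow 2).integrableOn_Icc).mono_set Set.Ioc_subset_Icc_self
  calc (∫ t in Set.Ioc (0:ℝ) T, ‖g' t‖ ^ 2)
      ≤ ∫ t in Set.Ioc (0:ℝ) T, Real.exp 1 * (w t * ‖g' t‖ ^ 2) := by
        refine setIntegral_mono_on hintC ((hwg_int.const_mul _).integrableOn)
          measurableSet_Ioc fun t ht => ?_
        obtain ⟨ht0, htT⟩ := ht
        have h2 : (T ^ 2)⁻¹ * t ^ 2 ≤ 1 := by
          rw [inv_mul_le_iff₀ (by positivity)]
          nlinarith
        have h3 : 1 ≤ Real.exp 1 * w t := by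
          rw [hw]
          simp only []
          rw [← Real.exp_add]
          apply Real.one_le_exp
          nlinarith
        calc ‖g' t‖ ^ 2 = 1 * ‖g' t‖ ^ 2 := (one_mul _).symm
          _ ≤ (Real.exp 1 * w t) * ‖g' t‖ ^ 2 :=
              mul_le_mul_of_nonneg_right h3 (by positivity)
          _ = Real.exp 1 * (w t * ‖g' t‖ ^ 2) := by ring
    _ ≤ ∫ t : ℝ, Real.exp 1 * (w t * ‖g' t‖ ^ 2) :=
        setIntegral_le_integral (hwg_int.const_mul _)
          (Filter.Eventually.of_forall fun t => by positivity)
    _ = Real.exp 1 * R := by rw [integral_const_mul, hR]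
    _ = Real.exp 1 * (Real.sqrt Real.pi * T * K.re) := by rw [hre]
    _ = Real.exp 1 * Real.sqrt Real.pi * T * K.re := by ring
end
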